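/- The d-Shapley Values are the Möbius transform of the value function: for every value function v, every x ∈ ℝ^d and every nonempty S ⊆ [d], Φ^d_S(x) = ∑_{L ⊆ S} (−1)^{|S|−|L|} · v(x, L). -/
import Mathlib
open Finset

variable {α : Type*} [DecidableEq α]

lemma neg_one_pow_sub_real {m c : ℕ} (h : c ≤ m) :
    (-1 : ℝ) ^ (m - c) = (-1) ^ m * (-1) ^ c := by
  obtain ⟨e, rfl⟩ : ∃ e, m = c + e := ⟨m - c, by omega⟩
  rw [Nat.add_sub_cancel_left, pow_add, mul_comm ((-1:ℝ)^c), mul_assoc, ← mul_pow]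
  norm_num

lemma sum_neg_one_pow_card (M : Finset α) :
    ∑ C ∈ M.powerset, (-1 : ℝ) ^ C.card = if M = ∅ then 1 else 0 := by
  have h := Finset.sum_powerset_neg_one_pow_card (x := M)
  have h2 := congrArg (fun z : ℤ => (z : ℝ)) h
  push_cast at h2
  convert h2 using 2

lemma sum_neg_one_pow_sub_card (M : Finset α) :
    ∑ C ∈ M.powerset, (-1 : ℝ) ^ (M.card - C.card) = if M = ∅ then 1 else 0 := by
  rw [show (if M = ∅ then (1:ℝ) else 0) = (-1)^M.card * (if M = ∅ then 1 else 0) by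
    split <;> simp_all]
  rw [← sum_neg_one_pow_card M, mul_sum]
  refine sum_congr rfl fun C hC => ?_
  rw [mem_powerset] at hC
  rw [neg_one_pow_sub_real (card_le_card hC)]

lemma sum_filter_superset (B W : Finset α) (h : B ⊆ W) (f : Finset α → ℝ) :
    ∑ L ∈ W.powerset.filter (fun L => B ⊆ L), f L = ∑ C ∈ (W \ B).powerset, f (B ∪ C) := by
  refine sum_nbij' (fun L => L \ B) (fun C => B ∪ C) ?_ ?_ ?_ ?_ ?_
  · intro L hL
    simp only [mem_filter, mem_powerset] at hL ⊢
    exact sdiff_subset_sdiff hL.1 Subset.rfl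
  · intro C hC
    simp only [mem_powerset] at hC
    simp only [mem_filter, mem_powerset]
    exact ⟨union_subset h (hC.trans sdiff_subset), subset_union_left⟩
  · intro L hL
    simp only [mem_filter, mem_powerset] at hL
    exact union_sdiff_of_subset hL.2
  · intro C hC
    simp only [mem_powerset] at hC
    show (B ∪ C) \ B = C
    rw [union_sdiff_cancel_left (Finset.disjoint_sdiff.mono_right hC)]
  · intro L hL
    simp only [mem_filter, mem_powerset] at hL
    rw [union_sdiff_of_subset hL.2]

lemma sign_filter (B W : Finset α) (h : B ⊆ W) :
    ∑ L ∈ W.powerset.filter (fun L => B ⊆ L), (-1 : ℝ) ^ (W.card - L.card) =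
      if B = W then 1 else 0 := by
  rw [sum_filter_superset B W h]
  have hW : (if B = W then (1:ℝ) else 0) = if W \ B = ∅ then 1 else 0 := by
    congr 1
    simp only [eq_iff_iff, sdiff_eq_empty_iff_subset]
    constructor
    · rintro rfl; exact Subset.rfl
    · exact fun h2 => h.antisymm h2
  rw [hW, ← sum_neg_one_pow_sub_card (W \ B)]
  refine sum_congr rfl fun C hC => ?_
  rw [mem_powerset] at hC
  have hd : Disjoint B C := Finset.disjoint_sdiff.mono_right hC
  congr 1
  rw [card_union_of_disjoint hd, card_sdiff_of_subset h]
  have := card_le_card h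
  have := card_le_card hC
  have := card_le_card (sdiff_subset (s := W) (t := B))
  rw [card_sdiff_of_subset h] at *
  omega

lemma sign_filter' (L W : Finset α) (h : L ⊆ W) :
    ∑ A ∈ W.powerset.filter (fun A => L ⊆ A), (-1 : ℝ) ^ (A.card - L.card) =
      if L = W then 1 else 0 := by
  rw [sum_filter_superset L W h]
  have hW : (if L = W then (1:ℝ) else 0) = if W \ L = ∅ then 1 else 0 := by
    congr 1
    simp only [eq_iff_iff, sdiff_eq_empty_iff_subset]
    exact ⟨fun h2 => h2 ▸ Subset.rfl, fun h2 => h.antisymm h2⟩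
  rw [hW, ← sum_neg_one_pow_card (W \ L)]
  refine sum_congr rfl fun C hC => ?_
  rw [mem_powerset] at hC
  have hd : Disjoint L C := Finset.disjoint_sdiff.mono_right hC
  congr 1
  rw [card_union_of_disjoint hd]
  omega

/-- The Möbius transform of a set function. -/
noncomputable def moeb (f : Finset α → ℝ) (U : Finset α) : ℝ :=
  ∑ L ∈ U.powerset, (-1 : ℝ) ^ (U.card - L.card) * f L

lemma sum_moeb (f : Finset α → ℝ) (W : Finset α) :
    ∑ A ∈ W.powerset, moeb f A = f W := by
  unfold moeb
  rw [sum_comm' (t' := W.powerset) (s' := fun L => W.powerset.filter (fun A => L ⊆ A))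
    (f := fun A L => (-1 : ℝ) ^ (A.card - L.card) * f L) ?_]
  · rw [show f W = ∑ L ∈ W.powerset, (if L = W then 1 else 0) * f L by
      simp [ite_mul]]
    refine sum_congr rfl fun L hL => ?_
    rw [mem_powerset] at hL
    rw [← sum_mul, sign_filter' L W hL]
  · intro A L
    simp only [mem_powerset, mem_filter, mem_powerset]
    constructor
    · rintro ⟨h1, h2⟩; exact ⟨⟨h1, h2⟩, h2.trans h1⟩
    · rintro ⟨⟨h1, h2⟩, h3⟩; exact ⟨h1, h2⟩

lemma inner_eq (f : Finset α → ℝ) {S T : Finset α} (hST : Disjoint S T) :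
    ∑ L ∈ S.powerset, (-1 : ℝ) ^ (S.card - L.card) * f (L ∪ T) =
      ∑ A ∈ T.powerset, moeb f (S ∪ A) := by
  calc
    ∑ L ∈ S.powerset, (-1 : ℝ) ^ (S.card - L.card) * f (L ∪ T)
        = ∑ L ∈ S.powerset, ∑ A ∈ (L ∪ T).powerset,
            (-1 : ℝ) ^ (S.card - L.card) * moeb f A := by
      refine sum_congr rfl fun L hL => ?_
      rw [← sum_moeb f (L ∪ T), mul_sum]
    _ = ∑ A ∈ (S ∪ T).powerset, ∑ L ∈ S.powerset.filter (fun L => A ⊆ L ∪ T),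
            (-1 : ℝ) ^ (S.card - L.card) * moeb f A := by
      refine sum_comm' fun L A => ?_
      simp only [mem_powerset, mem_filter]
      constructor
      · rintro ⟨h1, h2⟩
        exact ⟨⟨h1, h2⟩, h2.trans (union_subset_union h1 Subset.rfl)⟩
      · rintro ⟨⟨h1, h2⟩, h3⟩; exact ⟨h1, h2⟩
    _ = ∑ A ∈ (S ∪ T).powerset, (if A ∩ S = S then 1 else 0) * moeb f A := by
      refine sum_congr rfl fun A hA => ?_
      rw [mem_powerset] at hA
      rw [← sum_mul]
      congr 1
      rw [show S.powerset.filter (fun L => A ⊆ L ∪ T)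
            = S.powerset.filter (fun L => A ∩ S ⊆ L) by
        refine filter_congr fun L hL => ?_
        rw [mem_powerset] at hL
        constructor
        · intro h a ha
          rcases mem_inter.mp ha with ⟨ha1, ha2⟩
          rcases mem_union.mp (h ha1) with h' | h'
          · exact h'
          · exact absurd ha2 (disjoint_right.mp hST h')
        · intro h a ha
          rcases mem_union.mp (hA ha) with h' | h'
          · by_cases h'' : a ∈ T
            · exact mem_union_right _ h''
            · exact mem_union_left _ (h (mem_inter.mpr ⟨ha, h'⟩))
          · exact mem_union_right _ h']
      exact sign_filter (A ∩ S) S inter_subset_right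
    _ = ∑ A ∈ (S ∪ T).powerset.filter (fun A => S ⊆ A), moeb f A := by
      rw [sum_filter]
      refine sum_congr rfl fun A hA => ?_
      congr 1
      simp [Finset.inter_eq_right]
    _ = ∑ C ∈ ((S ∪ T) \ S).powerset, moeb f (S ∪ C) :=
      sum_filter_superset S (S ∪ T) subset_union_left _
    _ = ∑ A ∈ T.powerset, moeb f (S ∪ A) := by
      rw [union_sdiff_cancel_left hST]

lemma hockey (a M : ℕ) : ∑ c ∈ range (M + 1), (a + c).choose a = (a + M + 1).choose (a + 1) := by
  induction M with
  | zero => simp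
  | succ M ih =>
    rw [sum_range_succ, ih]
    rw [show a + (M + 1) = a + M + 1 by omega,
      show a + M + 1 + 1 = (a + M + 1) + 1 by omega, Nat.choose_succ_succ' (a + M + 1) a]
    omega

lemma nat_key {N a c : ℕ} (hc : c ≤ N - a) (ha : a ≤ N) :
    (N - a).choose c * ((N - a - c).factorial * (a + c).factorial) =
      (N - a).factorial * a.factorial * (a + c).choose a := by
  have h1 := Nat.choose_mul_factorial_mul_factorial hc
  have h2 := Nat.choose_mul_factorial_mul_factorial (Nat.le_add_right a c)
  rw [Nat.add_sub_cancel_left] at h2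
  refine Nat.eq_of_mul_eq_mul_right (Nat.factorial_pos c) ?_
  calc (N - a).choose c * ((N - a - c).factorial * (a + c).factorial) * c.factorial
      = ((N - a).choose c * c.factorial * (N - a - c).factorial) * (a + c).factorial := by ring
    _ = (N - a).factorial * (a + c).factorial := by rw [h1]
    _ = (N - a).factorial * ((a + c).choose a * a.factorial * c.factorial) := by rw [h2]
    _ = (N - a).factorial * a.factorial * (a + c).choose a * c.factorial := by ring

lemma num_id (N a : ℕ) (h : a ≤ N) :
    ∑ c ∈ range (N - a + 1), ((N - a).choose c : ℝ) *
        ((((N - (a + c)).factorial * (a + c).factorial : ℕ) : ℝ) /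
          (((N + 1).factorial : ℕ) : ℝ)) = 1 / (a + 1) := by
  have key : ∀ c ∈ range (N - a + 1),
      ((N - a).choose c : ℝ) *
        ((((N - (a + c)).factorial * (a + c).factorial : ℕ) : ℝ) /
          (((N + 1).factorial : ℕ) : ℝ)) =
      (((N - a).factorial * a.factorial : ℕ) : ℝ) / (((N + 1).factorial : ℕ) : ℝ) *
        ((a + c).choose a : ℕ) := by
    intro c hc
    rw [mem_range] at hc
    have hc' : c ≤ N - a := by omega
    have hNc : N - (a + c) = N - a - c := by omega
    rw [hNc, mul_div_assoc', div_mul_eq_mul_div]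
    congr 1
    exact_mod_cast nat_key hc' h
  rw [sum_congr rfl key, ← mul_sum]
  rw [show ∑ c ∈ range (N - a + 1), (((a + c).choose a : ℕ) : ℝ)
      = (((N + 1).choose (a + 1) : ℕ) : ℝ) by
    rw [← Nat.cast_sum]
    congr 1
    rw [hockey a (N - a)]
    congr 1
    omega]
  have hfin : (N + 1).choose (a + 1) * ((a + 1).factorial * (N - a).factorial)
      = (N + 1).factorial := by
    have := Nat.choose_mul_factorial_mul_factorial (show a + 1 ≤ N + 1 by omega)
    rw [show N + 1 - (a + 1) = N - a by omega] at this
    calc (N + 1).choose (a + 1) * ((a + 1).factorial * (N - a).factorial)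
        = (N + 1).choose (a + 1) * (a + 1).factorial * (N - a).factorial := by ring
      _ = (N + 1).factorial := this
  rw [div_mul_eq_mul_div, div_eq_div_iff] <;> try positivity
  rw [one_mul]
  push_cast [← hfin, Nat.factorial_succ (a)]
  push_cast
  ring

lemma choose_nat {u k : ℕ} (h : k ≤ u) :
    u.choose k * (u + 1) = (u + 1).choose k * (u - k + 1) := by
  have h1 := Nat.choose_mul_factorial_mul_factorial h
  have h2 := Nat.choose_mul_factorial_mul_factorial (show k ≤ u + 1 by omega)
  have h3 : u + 1 - k = (u - k) + 1 := by omega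
  rw [h3, Nat.factorial_succ] at h2
  refine Nat.eq_of_mul_eq_mul_right
    (Nat.mul_pos (Nat.factorial_pos k) (Nat.factorial_pos (u - k))) ?_
  calc u.choose k * (u + 1) * (k.factorial * (u - k).factorial)
      = (u.choose k * k.factorial * (u - k).factorial) * (u + 1) := by ring
    _ = u.factorial * (u + 1) := by rw [h1]
    _ = (u + 1).factorial := by rw [Nat.factorial_succ]; ring
    _ = (u + 1).choose k * k.factorial * ((u - k + 1) * (u - k).factorial) := h2.symm
    _ = (u + 1).choose k * (u - k + 1) * (k.factorial * (u - k).factorial) := by ring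

lemma bern_sum (u : ℕ) :
    ∑ k ∈ range (u + 1),
        (u.choose k : ℝ) * ((bernoulli k : ℝ) * (1 / (((u - k : ℕ) : ℝ) + 1))) =
      if u = 0 then 1 else 0 := by
  have hq : ((∑ k ∈ range (u + 1), ((u + 1).choose k : ℚ) * bernoulli k : ℚ) : ℝ)
      = if u + 1 = 1 then 1 else 0 := by
    rw [sum_bernoulli]; split <;> norm_num
  calc
    ∑ k ∈ range (u + 1),
        (u.choose k : ℝ) * ((bernoulli k : ℝ) * (1 / (((u - k : ℕ) : ℝ) + 1)))
      = ∑ k ∈ range (u + 1),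
          (((u + 1).choose k : ℝ) * (bernoulli k : ℝ)) * (1 / ((u : ℝ) + 1)) := by
      refine sum_congr rfl fun k hk => ?_
      rw [mem_range] at hk
      have hk' : k ≤ u := by omega
      have key : (u.choose k : ℝ) * ((u : ℝ) + 1)
          = ((u + 1).choose k : ℝ) * (((u - k : ℕ) : ℝ) + 1) := by
        exact_mod_cast choose_nat hk'
      rw [Nat.cast_sub hk'] at key ⊢
      have hx : ((u : ℝ) - k + 1) ≠ 0 := by
        have : (k : ℝ) ≤ u := by exact_mod_cast hk'
        nlinarith
      have hy : ((u : ℝ) + 1) ≠ 0 := by positivity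
      field_simp
      linear_combination (bernoulli k : ℝ) * key
    _ = (∑ k ∈ range (u + 1), ((u + 1).choose k : ℝ) * (bernoulli k : ℝ)) * (1 / ((u : ℝ) + 1)) :=
      (sum_mul _ _ _).symm
    _ = (if u + 1 = 1 then 1 else 0) * (1 / ((u : ℝ) + 1)) := by
      rw [← hq]; push_cast; ring
    _ = if u = 0 then 1 else 0 := by
      rcases Nat.eq_zero_or_pos u with rfl | hu
      · norm_num
      · rw [if_neg (by omega), if_neg (by omega), zero_mul]



open Finset

/-- The measure of contribution `Δ_S(x)` associated with a value function `v` on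
`d` features: `Δ_S(x) = ∑_{T ⊆ [d]∖S} ((d-|T|-|S|)!·|T|!/(d-|S|+1)!) ·
∑_{L ⊆ S} (-1)^{|S|-|L|} · v(x, L ∪ T)`. -/
noncomputable def deltaContribution (d : ℕ) (v : (Fin d → ℝ) → Finset (Fin d) → ℝ)
    (x : Fin d → ℝ) (S : Finset (Fin d)) : ℝ :=
  ∑ T ∈ Sᶜ.powerset,
    (((d - T.card - S.card).factorial * T.card.factorial : ℕ) : ℝ) /
        (((d - S.card + 1).factorial : ℕ) : ℝ) *
      ∑ L ∈ S.powerset, (-1 : ℝ) ^ (S.card - L.card) * v x (L ∪ T)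

/-- The `n`-Shapley Value of a subset `S` at a point `x`, for a value function `v`:
`Φ^n_S(x) = ∑_{k=0}^{n-|S|} ∑_{K ⊆ [d]∖S, |K| = k} B_k · Δ_{S∪K}(x)`, where `B_k`
are the Bernoulli numbers with `B₁ = -1/2`. -/
noncomputable def nShapley (d : ℕ) (v : (Fin d → ℝ) → Finset (Fin d) → ℝ)
    (n : ℕ) (x : Fin d → ℝ) (S : Finset (Fin d)) : ℝ :=
  ∑ k ∈ Finset.range (n - S.card + 1),
    ∑ K ∈ Sᶜ.powerset.filter (fun K => K.card = k),
      (bernoulli k : ℝ) * deltaContribution d v x (S ∪ K)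

lemma weight_sum {d : ℕ} (S A : Finset (Fin d)) (hA : A ⊆ Sᶜ) :
    ∑ T ∈ Sᶜ.powerset.filter (fun T => A ⊆ T),
        (((d - T.card - S.card).factorial * T.card.factorial : ℕ) : ℝ) /
          (((d - S.card + 1).factorial : ℕ) : ℝ) = 1 / ((A.card : ℝ) + 1) := by
  have hsc : Sᶜ.card = d - S.card := by
    rw [card_compl]; simp
  have haN : A.card ≤ d - S.card := hsc ▸ card_le_card hA
  rw [sum_filter_superset A Sᶜ hA]
  set N := d - S.card with hN
  have hcards : ∀ C ∈ (Sᶜ \ A).powerset,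
      (((d - (A ∪ C).card - S.card).factorial * (A ∪ C).card.factorial : ℕ) : ℝ) /
          (((d - S.card + 1).factorial : ℕ) : ℝ)
        = (fun c => (((N - (A.card + c)).factorial * (A.card + c).factorial : ℕ) : ℝ) /
            (((N + 1).factorial : ℕ) : ℝ)) C.card := by
    intro C hC
    rw [mem_powerset] at hC
    have hd : Disjoint A C := Finset.disjoint_sdiff.mono_right hC
    have h1 : d - (A.card + C.card) - S.card = N - (A.card + C.card) := by omega
    rw [card_union_of_disjoint hd, h1, ← hN]
  rw [sum_congr rfl hcards, sum_powerset_apply_card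
    (f := fun c => (((N - (A.card + c)).factorial * (A.card + c).factorial : ℕ) : ℝ) /
      (((N + 1).factorial : ℕ) : ℝ)) (x := Sᶜ \ A)]
  have hM : (Sᶜ \ A).card = N - A.card := by rw [card_sdiff_of_subset hA, hsc]
  rw [hM]
  have := num_id N A.card haN
  rw [← this]
  refine sum_congr rfl fun c hc => ?_
  rw [nsmul_eq_mul]

lemma delta_eq {d : ℕ} (v : (Fin d → ℝ) → Finset (Fin d) → ℝ) (x : Fin d → ℝ)
    (S : Finset (Fin d)) :
    deltaContribution d v x S
      = ∑ A ∈ Sᶜ.powerset, (1 / ((A.card : ℝ) + 1)) * moeb (v x) (S ∪ A) := by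
  unfold deltaContribution
  calc
    ∑ T ∈ Sᶜ.powerset,
        (((d - T.card - S.card).factorial * T.card.factorial : ℕ) : ℝ) /
            (((d - S.card + 1).factorial : ℕ) : ℝ) *
          ∑ L ∈ S.powerset, (-1 : ℝ) ^ (S.card - L.card) * v x (L ∪ T)
      = ∑ T ∈ Sᶜ.powerset, ∑ A ∈ T.powerset,
          (((d - T.card - S.card).factorial * T.card.factorial : ℕ) : ℝ) /
            (((d - S.card + 1).factorial : ℕ) : ℝ) * moeb (v x) (S ∪ A) := by
      refine sum_congr rfl fun T hT => ?_
      rw [mem_powerset] at hT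
      have hd : Disjoint S T := disjoint_compl_right.mono_right hT
      rw [inner_eq (v x) hd, mul_sum]
    _ = ∑ A ∈ Sᶜ.powerset, ∑ T ∈ Sᶜ.powerset.filter (fun T => A ⊆ T),
          (((d - T.card - S.card).factorial * T.card.factorial : ℕ) : ℝ) /
            (((d - S.card + 1).factorial : ℕ) : ℝ) * moeb (v x) (S ∪ A) := by
      refine sum_comm' fun T A => ?_
      simp only [mem_powerset, mem_filter]
      constructor
      · rintro ⟨h1, h2⟩; exact ⟨⟨h1, h2⟩, h2.trans h1⟩
      · rintro ⟨⟨h1, h2⟩, h3⟩; exact ⟨h1, h2⟩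
    _ = ∑ A ∈ Sᶜ.powerset, (1 / ((A.card : ℝ) + 1)) * moeb (v x) (S ∪ A) := by
      refine sum_congr rfl fun A hA => ?_
      rw [mem_powerset] at hA
      rw [← sum_mul, weight_sum S A hA]


/-- The `d`-Shapley Values are the Möbius transform of the value function:
`Φ^d_S(x) = ∑_{L ⊆ S} (-1)^{|S|-|L|} · v(x, L)` for every nonempty `S ⊆ [d]`. -/
theorem dShapley_eq_moebius (d : ℕ) (hd : 1 ≤ d)
    (v : (Fin d → ℝ) → Finset (Fin d) → ℝ) (x : Fin d → ℝ)
    (S : Finset (Fin d)) (hS : S.Nonempty) :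
    nShapley d v d x S =
      ∑ L ∈ S.powerset, (-1 : ℝ) ^ (S.card - L.card) * v x L := by
  have hRHS : ∑ L ∈ S.powerset, (-1 : ℝ) ^ (S.card - L.card) * v x L = moeb (v x) S := rfl
  rw [hRHS]
  unfold nShapley
  calc
    ∑ k ∈ Finset.range (d - S.card + 1),
        ∑ K ∈ Sᶜ.powerset.filter (fun K => K.card = k),
          (bernoulli k : ℝ) * deltaContribution d v x (S ∪ K)
      = ∑ k ∈ Finset.range (d - S.card + 1),
          ∑ K ∈ Sᶜ.powerset.filter (fun K => K.card = k),
            (bernoulli K.card : ℝ) * deltaContribution d v x (S ∪ K) := by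
      refine sum_congr rfl fun k hk => sum_congr rfl fun K hK => ?_
      rw [(mem_filter.mp hK).2]
    _ = ∑ K ∈ Sᶜ.powerset, (bernoulli K.card : ℝ) * deltaContribution d v x (S ∪ K) := by
      refine sum_fiberwise_of_maps_to ?_ _
      intro K hK
      rw [mem_powerset] at hK
      have h1 : K.card ≤ Sᶜ.card := card_le_card hK
      rw [card_compl] at h1
      simp only [Fintype.card_fin] at h1
      rw [mem_range]
      omega
    _ = ∑ K ∈ Sᶜ.powerset, ∑ A ∈ (S ∪ K)ᶜ.powerset,
          (bernoulli K.card : ℝ) *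
            ((1 / ((A.card : ℝ) + 1)) * moeb (v x) (S ∪ K ∪ A)) := by
      refine sum_congr rfl fun K hK => ?_
      rw [delta_eq, mul_sum]
    _ = ∑ D ∈ Sᶜ.powerset, ∑ K ∈ D.powerset,
          (bernoulli K.card : ℝ) *
            ((1 / (((D \ K).card : ℝ) + 1)) * moeb (v x) (S ∪ D)) := by
      rw [sum_sigma', sum_sigma']
      refine sum_nbij' (fun p => ⟨p.1 ∪ p.2, p.1⟩) (fun p => ⟨p.2, p.1 \ p.2⟩)
        ?_ ?_ ?_ ?_ ?_
      · rintro ⟨K, A⟩ hp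
        rw [mem_sigma, mem_powerset, mem_powerset] at hp
        rw [mem_sigma, mem_powerset, mem_powerset]
        refine ⟨union_subset hp.1 (hp.2.trans ?_), subset_union_left⟩
        exact compl_subset_compl.mpr subset_union_left
      · rintro ⟨D, K⟩ hp
        rw [mem_sigma, mem_powerset, mem_powerset] at hp
        rw [mem_sigma, mem_powerset, mem_powerset]
        refine ⟨hp.2.trans hp.1, ?_⟩
        intro a ha
        rw [mem_sdiff] at ha
        rw [mem_compl, mem_union]
        push_neg
        exact ⟨fun haS => (mem_compl.mp (hp.1 ha.1)) haS, ha.2⟩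
      · rintro ⟨K, A⟩ hp
        rw [mem_sigma, mem_powerset, mem_powerset] at hp
        have hdisj : Disjoint K A := by
          rw [disjoint_right]
          intro a haA
          have := hp.2 haA
          rw [mem_compl, mem_union] at this
          push_neg at this
          exact this.2
        dsimp only
        rw [union_sdiff_cancel_left hdisj]
      · rintro ⟨D, K⟩ hp
        rw [mem_sigma, mem_powerset, mem_powerset] at hp
        dsimp only
        rw [union_sdiff_of_subset hp.2]
      · rintro ⟨K, A⟩ hp
        rw [mem_sigma, mem_powerset, mem_powerset] at hp
        have hdisj : Disjoint K A := by
          rw [disjoint_right]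
          intro a haA
          have := hp.2 haA
          rw [mem_compl, mem_union] at this
          push_neg at this
          exact this.2
        dsimp only
        rw [union_sdiff_cancel_left hdisj, union_assoc]
    _ = ∑ D ∈ Sᶜ.powerset, (if D.card = 0 then (1:ℝ) else 0) * moeb (v x) (S ∪ D) := by
      refine sum_congr rfl fun D hD => ?_
      calc
        ∑ K ∈ D.powerset, (bernoulli K.card : ℝ) *
              ((1 / (((D \ K).card : ℝ) + 1)) * moeb (v x) (S ∪ D))
          = ∑ K ∈ D.powerset,
              (fun k => (bernoulli k : ℝ) * (1 / (((D.card - k : ℕ) : ℝ) + 1))) K.card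
                * moeb (v x) (S ∪ D) := by
          refine sum_congr rfl fun K hK => ?_
          rw [mem_powerset] at hK
          rw [card_sdiff_of_subset hK, mul_assoc]
        _ = (∑ K ∈ D.powerset,
              (fun k => (bernoulli k : ℝ) * (1 / (((D.card - k : ℕ) : ℝ) + 1))) K.card)
                * moeb (v x) (S ∪ D) := by rw [sum_mul]
        _ = (if D.card = 0 then (1:ℝ) else 0) * moeb (v x) (S ∪ D) := by
          rw [sum_powerset_apply_card
            (f := fun k => (bernoulli k : ℝ) * (1 / (((D.card - k : ℕ) : ℝ) + 1)))]
          congr 1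
          rw [← bern_sum D.card]
          refine sum_congr rfl fun k hk => ?_
          rw [nsmul_eq_mul]
    _ = moeb (v x) S := by
      have h1 : ∀ D ∈ Sᶜ.powerset,
          (if D.card = 0 then (1:ℝ) else 0) * moeb (v x) (S ∪ D)
            = if D = ∅ then moeb (v x) (S ∪ D) else 0 := by
        intro D hD
        by_cases h : D = ∅
        · subst h; simp
        · rw [if_neg h, if_neg (fun hc => h (card_eq_zero.mp hc)), zero_mul]
      rw [sum_congr rfl h1, sum_ite_eq' Sᶜ.powerset ∅ (fun D => moeb (v x) (S ∪ D)),
        if_pos (empty_mem_powerset _), union_empty]
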